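/- arXiv:1406.2827 — 3 statements merged into one kernel-verified Lean document; each statement's English description precedes it below -/
import Mathlib

section
/- Let ζ = (1+√3·i)/2 ∈ ℂ. For all integers a ≥ b ≥ 0, the combinatorial length of a+bζ in ℤ[ζ] equals a+b; that is, a+bζ can be written as a sum of a+b sixth roots of unity, and it cannot be written as a sum of fewer sixth roots of unity. -/
/-- ζ = (1+√3·i)/2, a primitive sixth root of unity. -/
noncomputable def zeta6 : ℂ := (1 + Real.sqrt 3 * Complex.I) / 2

lemma sqrt3_sq' : (Real.sqrt 3 : ℂ) * (Real.sqrt 3 : ℂ) = 3 := by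
  norm_cast
  rw [Real.mul_self_sqrt]; norm_num

lemma zeta6_sq : zeta6 ^ 2 = zeta6 - 1 := by
  unfold zeta6
  linear_combination (Complex.I^2/4) * sqrt3_sq' + (3/4) * Complex.I_sq

lemma zeta6_pow6 : zeta6 ^ 6 = 1 := by
  linear_combination ((zeta6^2-1)*(zeta6^2+zeta6+1)) * zeta6_sq

lemma zeta6_re : zeta6.re = 1/2 := by
  simp [zeta6, Complex.div_re]

lemma zeta6_im : zeta6.im = Real.sqrt 3 / 2 := by
  simp [zeta6, Complex.div_im]

lemma root_bound (u : ℂ) (hu : u ^ 6 = 1) :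
    Real.sqrt 3 * u.re + u.im ≤ Real.sqrt 3 := by
  have hs : Real.sqrt 3 ^ 2 = 3 := Real.sq_sqrt (by norm_num)
  have hs0 : 0 ≤ Real.sqrt 3 := Real.sqrt_nonneg 3
  have h1 : (u ^ 3 - 1) * (u ^ 3 + 1) = 0 := by linear_combination hu
  rcases mul_eq_zero.1 h1 with h | h
  · have h2 : (u - 1) * (u ^ 2 + u + 1) = 0 := by linear_combination h
    rcases mul_eq_zero.1 h2 with h3 | h3
    · have : u = 1 := by linear_combination h3
      subst this; simp
    · have hv : u * u + u + 1 = 0 := by linear_combination h3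
      have hre := congrArg Complex.re hv
      have him := congrArg Complex.im hv
      simp [Complex.add_re, Complex.add_im, Complex.mul_re, Complex.mul_im] at hre him
      set x := u.re; set y := u.im
      have hy : y * (2 * x + 1) = 0 := by linear_combination him
      rcases mul_eq_zero.1 hy with h | h
      · nlinarith [sq_nonneg (x + 1/2)]
      · have hx : x = -(1/2) := by linarith
        have hy2 : y * y = 3 / 4 := by nlinarith
        nlinarith [sq_nonneg (y - Real.sqrt 3 / 2), sq_nonneg (Real.sqrt 3 - 1)]
  · have h2 : (u + 1) * (u ^ 2 - u + 1) = 0 := by linear_combination h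
    rcases mul_eq_zero.1 h2 with h3 | h3
    · have : u = -1 := by linear_combination h3
      subst this
      simp only [Complex.neg_re, Complex.one_re, Complex.neg_im, Complex.one_im, neg_zero]
      nlinarith
    · have hv : u * u - u + 1 = 0 := by linear_combination h3
      have hre := congrArg Complex.re hv
      have him := congrArg Complex.im hv
      simp [Complex.sub_re, Complex.sub_im, Complex.add_re, Complex.add_im,
        Complex.mul_re, Complex.mul_im] at hre him
      set x := u.re; set y := u.im
      have hy : y * (2 * x - 1) = 0 := by linear_combination him
      rcases mul_eq_zero.1 hy with h | h
      · nlinarith [sq_nonneg (x - 1/2)]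
      · have hx : x = 1/2 := by linarith
        have hy2 : y * y = 3 / 4 := by nlinarith
        nlinarith [sq_nonneg (y - Real.sqrt 3 / 2), sq_nonneg (Real.sqrt 3 - 1)]

/-- for integers a ≥ b ≥ 0, the combinatorial length of a+bζ in the
Eisenstein integers is a+b: `a+b` is the least number n such that a+bζ is a sum
of n sixth roots of unity. -/
theorem combLength_eisenstein_canonical (a b : ℤ) (hab : b ≤ a) (hb : 0 ≤ b) :
    IsLeast {n : ℕ | ∃ f : Fin n → ℂ, (∀ k, (f k) ^ 6 = 1) ∧
      (a : ℂ) + (b : ℂ) * zeta6 = ∑ k, f k} (a + b).toNat := by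
  have ha : 0 ≤ a := le_trans hb hab
  constructor
  · -- membership: a copies of 1 and b copies of ζ
    simp only [Set.mem_setOf_eq]
    rw [Int.toNat_add ha hb]
    refine ⟨fun k => if (k : ℕ) < a.toNat then 1 else zeta6, fun k => ?_, ?_⟩
    · dsimp only
      split_ifs
      · exact one_pow 6
      · exact zeta6_pow6
    · rw [Fin.sum_univ_add (f := fun k : Fin (a.toNat + b.toNat) =>
        if (k : ℕ) < a.toNat then (1 : ℂ) else zeta6)]
      have e1 : ∀ i : Fin a.toNat,
          (if ((Fin.castAdd b.toNat i : Fin (a.toNat + b.toNat)) : ℕ) < a.toNat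
            then (1 : ℂ) else zeta6) = 1 := by
        intro i; simp [i.isLt]
      have e2 : ∀ i : Fin b.toNat,
          (if ((Fin.natAdd a.toNat i : Fin (a.toNat + b.toNat)) : ℕ) < a.toNat
            then (1 : ℂ) else zeta6) = zeta6 := by
        intro i; simp
      rw [Finset.sum_congr rfl (fun i _ => e1 i), Finset.sum_congr rfl (fun i _ => e2 i)]
      simp [Finset.sum_const, Finset.card_univ, nsmul_eq_mul]
      have ca : ((a.toNat : ℕ) : ℂ) = (a : ℂ) := by exact_mod_cast Int.toNat_of_nonneg ha
      have cb : ((b.toNat : ℕ) : ℂ) = (b : ℂ) := by exact_mod_cast Int.toNat_of_nonneg hb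
      rw [ca, cb]
  · -- lower bound
    rintro n ⟨f, hf, heq⟩
    have hs : Real.sqrt 3 ^ 2 = 3 := Real.sq_sqrt (by norm_num)
    have hs0 : 0 < Real.sqrt 3 := Real.sqrt_pos.2 (by norm_num)
    have hL : Real.sqrt 3 * ((a : ℂ) + (b : ℂ) * zeta6).re
        + ((a : ℂ) + (b : ℂ) * zeta6).im = Real.sqrt 3 * ((a : ℝ) + (b : ℝ)) := by
      simp [Complex.add_re, Complex.add_im, Complex.mul_re, Complex.mul_im,
        zeta6_re, zeta6_im]
      ring
    have hsum : Real.sqrt 3 * (∑ k, f k).re + (∑ k, f k).im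
        = ∑ k, (Real.sqrt 3 * (f k).re + (f k).im) := by
      rw [Complex.re_sum, Complex.im_sum, Finset.mul_sum, ← Finset.sum_add_distrib]
    have hle : ∑ k, (Real.sqrt 3 * (f k).re + (f k).im)
        ≤ ∑ _k : Fin n, Real.sqrt 3 :=
      Finset.sum_le_sum fun k _ => root_bound (f k) (hf k)
    have hconst : ∑ _k : Fin n, Real.sqrt 3 = n * Real.sqrt 3 := by
      simp [Finset.sum_const, Finset.card_univ, nsmul_eq_mul]
    have key : Real.sqrt 3 * ((a : ℝ) + (b : ℝ)) ≤ Real.sqrt 3 * (n : ℝ) := by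
      rw [← hL, heq, hsum]
      calc ∑ k, (Real.sqrt 3 * (f k).re + (f k).im)
          ≤ ∑ _k : Fin n, Real.sqrt 3 := hle
        _ = Real.sqrt 3 * (n : ℝ) := by rw [hconst]; ring
    have habn : (a : ℝ) + (b : ℝ) ≤ (n : ℝ) := le_of_mul_le_mul_left key hs0
    rw [Int.toNat_le]
    exact_mod_cast habn
end

section
/- Let M be a normal subgroup of the group GL(2, ℤ[i]) of invertible 2×2 matrices over the Gaussian integers. Then the set {w ∈ ℤ[i] : the matrix with rows (1, w) and (0, 1) belongs to M} is an ideal of ℤ[i]. -/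
/-- The upper unitriangular matrix p_w with rows (1, w) and (0, 1), as an
element of GL(2, R). -/
def pGL {R : Type*} [CommRing R] (w : R) : GL (Fin 2) R :=
  ⟨!![1, w; 0, 1], !![1, -w; 0, 1],
    by ext i j; fin_cases i <;> fin_cases j <;>
      simp [Matrix.mul_apply, Fin.sum_univ_two, Matrix.one_apply],
    by ext i j; fin_cases i <;> fin_cases j <;>
      simp [Matrix.mul_apply, Fin.sum_univ_two, Matrix.one_apply]⟩

lemma pGL_mul {R : Type*} [CommRing R] (w w' : R) : pGL w * pGL w' = pGL (w + w') := by
  ext i j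
  fin_cases i <;> fin_cases j <;>
    simp [pGL, Matrix.mul_apply, Fin.sum_univ_two, add_comm]

lemma pGL_zero {R : Type*} [CommRing R] : (pGL (0 : R)) = 1 := by
  ext i j
  fin_cases i <;> fin_cases j <;> simp [pGL, Matrix.one_apply]

lemma pGL_inv {R : Type*} [CommRing R] (w : R) : (pGL w)⁻¹ = pGL (-w) := by
  rw [inv_eq_iff_mul_eq_one, pGL_mul]
  simp [pGL_zero]

/-- diag(i, 1) as an element of GL(2, ℤ[i]). -/
def dGL : GL (Fin 2) GaussianInt :=
  ⟨!![⟨0,1⟩, 0; 0, 1], !![⟨0,-1⟩, 0; 0, 1],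
    by ext i j <;> fin_cases i <;> fin_cases j <;>
      simp [Matrix.mul_apply, Fin.sum_univ_two, Matrix.one_apply],
    by ext i j <;> fin_cases i <;> fin_cases j <;>
      simp [Matrix.mul_apply, Fin.sum_univ_two, Matrix.one_apply]⟩

lemma dGL_conj (w : GaussianInt) : dGL * pGL w * dGL⁻¹ = pGL (⟨0,1⟩ * w) := by
  rw [eq_comm, eq_mul_inv_iff_mul_eq]
  ext i j <;> fin_cases i <;> fin_cases j <;>
    simp [pGL, dGL, Matrix.mul_apply, Fin.sum_univ_two, mul_comm]

/-- for a normal subgroup M of GL(2, ℤ[i]), the set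
{w ∈ ℤ[i] : p_w ∈ M} is an ideal of ℤ[i]. -/
theorem pGL_mem_normal_subgroup_isIdeal_gaussian
    (M : Subgroup (GL (Fin 2) GaussianInt)) (hM : M.Normal) :
    ∃ I : Ideal GaussianInt, ∀ w : GaussianInt, w ∈ I ↔ pGL w ∈ M := by
  have hi : ∀ w : GaussianInt, pGL w ∈ M → pGL (⟨0,1⟩ * w) ∈ M := by
    intro w hw
    rw [← dGL_conj]
    exact hM.conj_mem _ hw dGL
  refine ⟨{ carrier := {w | pGL w ∈ M}
            add_mem' := ?_
            zero_mem' := ?_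
            smul_mem' := ?_ }, fun w => Iff.rfl⟩
  · intro a b ha hb
    have := M.mul_mem ha hb
    rwa [pGL_mul] at this
  · simp only [Set.mem_setOf_eq, pGL_zero]; exact M.one_mem
  · intro c w hw
    simp only [Set.mem_setOf_eq] at hw ⊢
    have hneg : ∀ v : GaussianInt, pGL v ∈ M → pGL (-v) ∈ M := by
      intro v hv; rw [← pGL_inv]; exact M.inv_mem hv
    have hzsmul : ∀ (n : ℤ) (v : GaussianInt), pGL v ∈ M → pGL (n * v) ∈ M := by
      intro n
      induction n using Int.induction_on with
      | zero => intro v _; simpa [pGL_zero] using M.one_mem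
      | succ k ih =>
          intro v hv
          have := M.mul_mem (ih v hv) hv
          rw [pGL_mul] at this
          convert this using 2
          push_cast; ring
      | pred k ih =>
          intro v hv
          have := M.mul_mem (ih v hv) (hneg v hv)
          rw [pGL_mul] at this
          convert this using 2
          push_cast; ring
    have h1 : pGL ((c.re : GaussianInt) * w) ∈ M := hzsmul c.re w hw
    have h2 : pGL ((c.im : GaussianInt) * (⟨0,1⟩ * w)) ∈ M := hzsmul c.im _ (hi w hw)
    have := M.mul_mem h1 h2
    rw [pGL_mul] at this
    convert this using 2
    have hc : c = (c.re : GaussianInt) + (c.im : GaussianInt) * ⟨0,1⟩ := by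
      ext <;> simp
    show c * w = _
    conv_lhs => rw [hc]
    ring
end

section
/- Let p, q be natural numbers, r an even natural number, and a a natural number. Then the assignment P ↦ Q⁻¹P⁻¹Q, Q ↦ Q⁻¹, R ↦ R⁻¹ extends to a well-defined group automorphism μ of the presented group G_{p,q,r}(a,0) = ⟨P, Q, R | P^p, Q^q, R^r, (PQ)², (QR)², (PQR)², (Q R^{r/2+1})^a⟩, and μ is an involution (μ ∘ μ = id). -/
/-- The relators of the presentation
⟨P, Q, R | P^p, Q^q, R^r, (PQ)², (QR)², (PQR)², (Q R^{r/2+1})^a (R Q R^{r/2})^b⟩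
of the orientation-preserving symmetry group of the universal regular
tessellation of type {p,q,r} and cusp modulus a+bu, u = e^{2πi/r}.
The generators P, Q, R are `FreeGroup.of 0`, `FreeGroup.of 1`, `FreeGroup.of 2`. -/
def tessRels (p q r a b : ℕ) : Set (FreeGroup (Fin 3)) :=
  {(FreeGroup.of 0) ^ p, (FreeGroup.of 1) ^ q, (FreeGroup.of 2) ^ r,
   (FreeGroup.of 0 * FreeGroup.of 1) ^ 2,
   (FreeGroup.of 1 * FreeGroup.of 2) ^ 2,
   (FreeGroup.of 0 * FreeGroup.of 1 * FreeGroup.of 2) ^ 2,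
   (FreeGroup.of 1 * (FreeGroup.of 2) ^ (r / 2 + 1)) ^ a *
     (FreeGroup.of 2 * FreeGroup.of 1 * (FreeGroup.of 2) ^ (r / 2)) ^ b}

/-- G_{p,q,r}(a,b), the presented group of the above presentation. -/
def tessGroup (p q r a b : ℕ) : Type := PresentedGroup (tessRels p q r a b)

instance (p q r a b : ℕ) : Group (tessGroup p q r a b) :=
  inferInstanceAs (Group (PresentedGroup _))

/-- The generators P, Q, R of G_{p,q,r}(a,b), the images of the free generators. -/
def tessGen (p q r a b : ℕ) (i : Fin 3) : tessGroup p q r a b :=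
  PresentedGroup.of i

section Aux

variable {G : Type*} [Group G]

lemma tessAux_c1 (P Q : G) (n : ℕ) (h : P ^ n = 1) : (Q⁻¹ * P⁻¹ * Q) ^ n = 1 := by
  rw [show Q⁻¹ * P⁻¹ * Q = Q⁻¹ * P⁻¹ * Q⁻¹⁻¹ by rw [inv_inv], conj_pow, inv_pow, h,
    inv_one, mul_one, inv_inv, inv_mul_cancel]

lemma tessAux_inv_pow (x : G) (n : ℕ) (h : x ^ n = 1) : (x⁻¹) ^ n = 1 := by
  rw [inv_pow, h, inv_one]

lemma tessAux_c4 (P Q : G) (h : (P * Q) ^ 2 = 1) : (Q⁻¹ * P⁻¹ * Q * Q⁻¹) ^ 2 = 1 := by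
  have e : (Q⁻¹ * P⁻¹ * Q * Q⁻¹ : G) = (P * Q)⁻¹ := by group
  rw [e, inv_pow, h, inv_one]

lemma tessAux_c5 (Q R : G) (h : (Q * R) ^ 2 = 1) : (Q⁻¹ * R⁻¹) ^ 2 = 1 := by
  have e : (Q⁻¹ * R⁻¹ : G) = (Q⁻¹ * (Q * R) * Q⁻¹⁻¹)⁻¹ := by group
  rw [e, inv_pow, conj_pow, h, mul_one, inv_inv, inv_mul_cancel, inv_one]

lemma tessAux_c6 (P Q R : G) (h : (P * Q * R) ^ 2 = 1) :
    (Q⁻¹ * P⁻¹ * Q * Q⁻¹ * R⁻¹) ^ 2 = 1 := by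
  have e : (Q⁻¹ * P⁻¹ * Q * Q⁻¹ * R⁻¹ : G) = (R * (P * Q * R) * R⁻¹)⁻¹ := by group
  rw [e, inv_pow, conj_pow, h, mul_one, mul_inv_cancel, inv_one]

lemma tessAux_c7 (Q R : G) (s n : ℕ) (h : (Q * R ^ s) ^ n = 1) :
    (Q⁻¹ * (R⁻¹) ^ s) ^ n = 1 := by
  have e : (Q⁻¹ * (R⁻¹) ^ s : G) = (R ^ s * Q)⁻¹ := by
    rw [mul_inv_rev, inv_pow]
  rw [e, inv_pow, show (R ^ s * Q : G) = Q⁻¹ * (Q * R ^ s) * Q⁻¹⁻¹ by group, conj_pow,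
    h, mul_one, inv_inv, inv_mul_cancel, inv_one]

lemma tessAux_i0 (P Q : G) : Q⁻¹⁻¹ * (Q⁻¹ * P⁻¹ * Q)⁻¹ * Q⁻¹ = P := by group

lemma tessAux_i1 (Q : G) : Q⁻¹⁻¹ = Q := inv_inv Q

end Aux

set_option maxHeartbeats 1000000 in
/-- for even r, the assignment P ↦ Q⁻¹P⁻¹Q, Q ↦ Q⁻¹, R ↦ R⁻¹
extends to a group automorphism μ of G_{p,q,r}(a,0), and μ is an involution. -/
theorem tessGroup_mirror_automorphism (p q r a : ℕ) (hr : Even r) :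
    ∃ μ : tessGroup p q r a 0 ≃* tessGroup p q r a 0,
      μ (tessGen p q r a 0 0) =
        (tessGen p q r a 0 1)⁻¹ * (tessGen p q r a 0 0)⁻¹ * tessGen p q r a 0 1 ∧
      μ (tessGen p q r a 0 1) = (tessGen p q r a 0 1)⁻¹ ∧
      μ (tessGen p q r a 0 2) = (tessGen p q r a 0 2)⁻¹ ∧
      ∀ x, μ (μ x) = x := by
  let P : tessGroup p q r a 0 := tessGen p q r a 0 0
  let Q : tessGroup p q r a 0 := tessGen p q r a 0 1
  let R : tessGroup p q r a 0 := tessGen p q r a 0 2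
  have hrel : ∀ x ∈ tessRels p q r a 0,
      (QuotientGroup.mk x : tessGroup p q r a 0) = 1 := fun x hx =>
    (QuotientGroup.eq_one_iff x).mpr (Subgroup.subset_normalClosure hx)
  have hmkhom : (QuotientGroup.mk' (Subgroup.normalClosure (tessRels p q r a 0))
      : FreeGroup (Fin 3) →* PresentedGroup (tessRels p q r a 0))
      = FreeGroup.lift (tessGen p q r a 0) := by
    apply FreeGroup.ext_hom
    intro i
    rfl
  have hmk : ∀ w : FreeGroup (Fin 3),
      (QuotientGroup.mk w : tessGroup p q r a 0) = FreeGroup.lift (tessGen p q r a 0) w :=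
    fun w => DFunLike.congr_fun hmkhom w
  have key : ∀ w ∈ tessRels p q r a 0, FreeGroup.lift (tessGen p q r a 0) w = 1 :=
    fun w hw => (hmk w) ▸ hrel w hw
  have hPQ : (P * Q) ^ 2 = 1 := by
    have := key _ (show (FreeGroup.of 0 * FreeGroup.of 1 : FreeGroup (Fin 3)) ^ 2
      ∈ tessRels p q r a 0 by simp [tessRels])
    simpa only [map_pow, map_mul, FreeGroup.lift_apply_of] using this
  have hQR : (Q * R) ^ 2 = 1 := by
    have := key _ (show (FreeGroup.of 1 * FreeGroup.of 2 : FreeGroup (Fin 3)) ^ 2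
      ∈ tessRels p q r a 0 by simp [tessRels])
    simpa only [map_pow, map_mul, FreeGroup.lift_apply_of] using this
  have hPQR : (P * Q * R) ^ 2 = 1 := by
    have := key _ (show (FreeGroup.of 0 * FreeGroup.of 1 * FreeGroup.of 2 : FreeGroup (Fin 3)) ^ 2
      ∈ tessRels p q r a 0 by simp [tessRels])
    simpa only [map_pow, map_mul, FreeGroup.lift_apply_of] using this
  have hPp : P ^ p = 1 := by
    have := key _ (show (FreeGroup.of 0 : FreeGroup (Fin 3)) ^ p
      ∈ tessRels p q r a 0 by simp [tessRels])
    simpa only [map_pow, FreeGroup.lift_apply_of] using this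
  have hQq : Q ^ q = 1 := by
    have := key _ (show (FreeGroup.of 1 : FreeGroup (Fin 3)) ^ q
      ∈ tessRels p q r a 0 by simp [tessRels])
    simpa only [map_pow, FreeGroup.lift_apply_of] using this
  have hRr : R ^ r = 1 := by
    have := key _ (show (FreeGroup.of 2 : FreeGroup (Fin 3)) ^ r
      ∈ tessRels p q r a 0 by simp [tessRels])
    simpa only [map_pow, FreeGroup.lift_apply_of] using this
  have hC : (Q * R ^ (r / 2 + 1)) ^ a = 1 := by
    have := key _ (show (FreeGroup.of 1 * (FreeGroup.of 2 : FreeGroup (Fin 3)) ^ (r / 2 + 1)) ^ a *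
        (FreeGroup.of 2 * FreeGroup.of 1 * (FreeGroup.of 2) ^ (r / 2)) ^ 0
      ∈ tessRels p q r a 0 by simp [tessRels])
    simpa only [pow_zero, mul_one, map_pow, map_mul, FreeGroup.lift_apply_of] using this
  let f : Fin 3 → tessGroup p q r a 0 := ![Q⁻¹ * P⁻¹ * Q, Q⁻¹, R⁻¹]
  have hf0 : f 0 = Q⁻¹ * P⁻¹ * Q := rfl
  have hf1 : f 1 = Q⁻¹ := rfl
  have hf2 : f 2 = R⁻¹ := rfl
  have hrels : ∀ x ∈ tessRels p q r a 0, FreeGroup.lift f x = 1 := by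
    intro x hx
    simp only [tessRels, Set.mem_insert_iff, Set.mem_singleton_iff] at hx
    rcases hx with rfl | rfl | rfl | rfl | rfl | rfl | rfl
    · simp only [map_pow, FreeGroup.lift_apply_of, hf0]
      exact tessAux_c1 P Q p hPp
    · simp only [map_pow, FreeGroup.lift_apply_of, hf1]
      exact tessAux_inv_pow Q q hQq
    · simp only [map_pow, FreeGroup.lift_apply_of, hf2]
      exact tessAux_inv_pow R r hRr
    · simp only [map_pow, map_mul, FreeGroup.lift_apply_of, hf0, hf1]
      exact tessAux_c4 P Q hPQ
    · simp only [map_pow, map_mul, FreeGroup.lift_apply_of, hf1, hf2]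
      exact tessAux_c5 Q R hQR
    · simp only [map_pow, map_mul, FreeGroup.lift_apply_of, hf0, hf1, hf2]
      exact tessAux_c6 P Q R hPQR
    · simp only [pow_zero, mul_one, map_pow, map_mul, FreeGroup.lift_apply_of, hf1, hf2]
      exact tessAux_c7 Q R (r / 2 + 1) a hC
  let φ : tessGroup p q r a 0 →* tessGroup p q r a 0 := PresentedGroup.toGroup hrels
  have hφ0 : φ P = Q⁻¹ * P⁻¹ * Q := PresentedGroup.toGroup.of hrels
  have hφ1 : φ Q = Q⁻¹ := PresentedGroup.toGroup.of hrels
  have hφ2 : φ R = R⁻¹ := PresentedGroup.toGroup.of hrels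
  have hinv : ∀ x, φ (φ x) = x := by
    have hcomp : φ.comp φ = MonoidHom.id _ := by
      apply PresentedGroup.ext
      intro i
      fin_cases i
      · show φ (φ P) = P
        rw [hφ0]
        simp only [map_mul, map_inv, hφ0, hφ1]
        exact tessAux_i0 P Q
      · show φ (φ Q) = Q
        rw [hφ1]
        simp only [map_inv, hφ1]
        exact tessAux_i1 Q
      · show φ (φ R) = R
        rw [hφ2]
        simp only [map_inv, hφ2]
        exact tessAux_i1 R
    intro x
    have : (φ.comp φ) x = (MonoidHom.id _) x := by rw [hcomp]
    simpa using this
  exact ⟨{ toFun := φ, invFun := φ, left_inv := hinv, right_inv := hinv,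
           map_mul' := φ.map_mul }, hφ0, hφ1, hφ2, hinv⟩
end
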